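/- Fix integers k ≥ 2 and d ≥ 3 and set L := (k−1)(d−1). The function p ↦ R(p) is convex on the interval [0, 1 − 1/L]. -/

import Mathlib

open Finset

noncomputable def gsum (L : ℕ) (x : ℝ) : ℝ := ∑ i ∈ range L, x ^ i
noncomputable def gsum1 (L : ℕ) (x : ℝ) : ℝ := ∑ i ∈ range L, (i : ℝ) * x ^ (i - 1)
noncomputable def gsum2 (L : ℕ) (x : ℝ) : ℝ :=
  ∑ i ∈ range L, (i : ℝ) * ((↑(i - 1) : ℝ) * x ^ (i - 1 - 1))

lemma hasDerivAt_gsum (L : ℕ) (x : ℝ) : HasDerivAt (gsum L) (gsum1 L x) x := by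
  have : ∀ i ∈ range L, HasDerivAt (fun y : ℝ => y ^ i) ((i : ℝ) * x ^ (i - 1)) x :=
    fun i _ => hasDerivAt_pow i x
  show HasDerivAt (fun y => ∑ i ∈ range L, y ^ i) (gsum1 L x) x
  simpa [gsum1] using HasDerivAt.fun_sum this

lemma hasDerivAt_gsum1 (L : ℕ) (x : ℝ) : HasDerivAt (gsum1 L) (gsum2 L x) x := by
  have : ∀ i ∈ range L, HasDerivAt (fun y : ℝ => (i : ℝ) * y ^ (i - 1))
      ((i : ℝ) * ((↑(i - 1) : ℝ) * x ^ (i - 1 - 1))) x :=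
    fun i _ => (hasDerivAt_pow (i - 1) x).const_mul (i : ℝ)
  show HasDerivAt (fun y => ∑ i ∈ range L, (i : ℝ) * y ^ (i - 1)) (gsum2 L x) x
  simpa [gsum2] using HasDerivAt.fun_sum this

lemma gsum_e1 (L : ℕ) (x : ℝ) : (1 - x) * gsum L x = 1 - x ^ L := by
  have := geom_sum_mul x L
  unfold gsum
  linear_combination -this

lemma gsum_e2 (m : ℕ) (x : ℝ) :
    (1 - x) * gsum1 (m + 2) x = gsum (m + 2) x - ((m : ℝ) + 2) * x ^ (m + 1) := by
  have h1 : HasDerivAt (fun y : ℝ => (1 - y) * gsum (m + 2) y)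
      ((-1) * gsum (m + 2) x + (1 - x) * gsum1 (m + 2) x) x :=
    ((hasDerivAt_id x).const_sub 1).mul (hasDerivAt_gsum (m + 2) x)
  have h2 : HasDerivAt (fun y : ℝ => 1 - y ^ (m + 2))
      (-((↑(m + 2) : ℝ) * x ^ (m + 2 - 1))) x := (hasDerivAt_pow (m + 2) x).const_sub 1
  have hfg : (fun y : ℝ => (1 - y) * gsum (m + 2) y) = fun y : ℝ => 1 - y ^ (m + 2) :=
    funext fun y => gsum_e1 (m + 2) y
  rw [hfg] at h1
  have := h1.unique h2
  push_cast at this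
  linarith

lemma gsum_e3 (m : ℕ) (x : ℝ) :
    (1 - x) * gsum2 (m + 2) x =
      2 * gsum1 (m + 2) x - ((m : ℝ) + 2) * ((m : ℝ) + 1) * x ^ m := by
  have h1 : HasDerivAt (fun y : ℝ => (1 - y) * gsum1 (m + 2) y)
      ((-1) * gsum1 (m + 2) x + (1 - x) * gsum2 (m + 2) x) x :=
    ((hasDerivAt_id x).const_sub 1).mul (hasDerivAt_gsum1 (m + 2) x)
  have h2 : HasDerivAt (fun y : ℝ => gsum (m + 2) y - ((m : ℝ) + 2) * y ^ (m + 1))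
      (gsum1 (m + 2) x - ((m : ℝ) + 2) * ((↑(m + 1) : ℝ) * x ^ (m + 1 - 1))) x :=
    (hasDerivAt_gsum (m + 2) x).sub (((hasDerivAt_pow (m + 1) x).const_mul _))
  have hfg : (fun y : ℝ => (1 - y) * gsum1 (m + 2) y)
      = fun y : ℝ => gsum (m + 2) y - ((m : ℝ) + 2) * y ^ (m + 1) :=
    funext fun y => gsum_e2 m y
  rw [hfg] at h1
  have := h1.unique h2
  push_cast at this
  linarith

lemma gsum_ge_one (L : ℕ) (hL : 0 < L) (x : ℝ) (hx : 0 ≤ x) : 1 ≤ gsum L x := by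
  have h0 : (0 : ℕ) ∈ range L := mem_range.2 hL
  have := single_le_sum (f := fun i => x ^ i) (fun i _ => pow_nonneg hx i) h0
  simpa [gsum] using this

lemma gsum_pos (L : ℕ) (hL : 0 < L) (x : ℝ) (hx : 0 ≤ x) : 0 < gsum L x :=
  lt_of_lt_of_le one_pos (gsum_ge_one L hL x hx)

lemma gsum_pair (m : ℕ) (x : ℝ) (hx0 : 0 ≤ x) (hx1 : x ≤ 1) :
    2 * gsum (m + 2) x ≤ ((m : ℝ) + 3) + ((m : ℝ) + 1) * x ^ (m + 2) := by
  have hsplit : gsum (m + 2) x = 1 + ∑ j ∈ range (m + 1), x ^ (j + 1) := by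
    rw [gsum, Finset.sum_range_succ']
    rw [pow_zero, add_comm]
  have hrefl : ∑ j ∈ range (m + 1), x ^ (j + 1)
      = ∑ j ∈ range (m + 1), x ^ (m + 1 - j) := by
    rw [← Finset.sum_range_reflect (fun j => x ^ (m + 1 - j)) (m + 1)]
    refine Finset.sum_congr rfl fun j hj => ?_
    rw [mem_range] at hj
    congr 1
    omega
  have hterm : ∀ j ∈ range (m + 1), x ^ (j + 1) + x ^ (m + 1 - j) ≤ 1 + x ^ (m + 2) := by
    intro j hj
    have hj' : j < m + 1 := mem_range.mp hj
    have hA : x ^ (j + 1) ≤ 1 := pow_le_one₀ hx0 hx1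
    have hB : x ^ (m + 1 - j) ≤ 1 := pow_le_one₀ hx0 hx1
    have h1 : (0:ℝ) ≤ (1 - x ^ (j + 1)) * (1 - x ^ (m + 1 - j)) :=
      mul_nonneg (by linarith) (by linarith)
    have h2 : x ^ (j + 1) * x ^ (m + 1 - j) = x ^ (m + 2) := by
      rw [← pow_add]; congr 1; omega
    nlinarith
  have hsum : ∑ j ∈ range (m + 1), (x ^ (j + 1) + x ^ (m + 1 - j))
      ≤ ∑ j ∈ range (m + 1), ((1:ℝ) + x ^ (m + 2)) := Finset.sum_le_sum hterm
  rw [Finset.sum_add_distrib, ← hrefl, Finset.sum_const] at hsum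
  simp only [card_range, nsmul_eq_mul] at hsum
  push_cast at hsum
  rw [hsplit]
  linarith

lemma gsum_key (m : ℕ) (x : ℝ) (hx0 : 0 ≤ x) (hx1 : x < 1) :
    gsum (m + 2) x * gsum2 (m + 2) x ≤ 2 * (gsum1 (m + 2) x) ^ 2 := by
  set s := gsum (m + 2) x with hs
  set t := gsum1 (m + 2) x with ht
  set w := gsum2 (m + 2) x with hw
  have e1 := gsum_e1 (m + 2) x
  have e2 := gsum_e2 m x
  have e3 := gsum_e3 m x
  have hinner : 2 * ((m : ℝ) + 2) * x ^ (m + 2) + s * (((m : ℝ) + 1) - ((m : ℝ) + 3) * x)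
      = ((m : ℝ) + 3) + ((m : ℝ) + 1) * x ^ (m + 2) - 2 * s := by
    push_cast at e1
    linear_combination ((m : ℝ) + 3) * e1
  have hinner_nonneg : 0 ≤ 2 * ((m : ℝ) + 2) * x ^ (m + 2)
      + s * (((m : ℝ) + 1) - ((m : ℝ) + 3) * x) := by
    rw [hinner]
    have := gsum_pair m x hx0 hx1.le
    linarith
  have hid : (1 - x) ^ 2 * (2 * t ^ 2 - s * w)
      = ((m : ℝ) + 2) * x ^ m *
        (2 * ((m : ℝ) + 2) * x ^ (m + 2) + s * (((m : ℝ) + 1) - ((m : ℝ) + 3) * x)) := by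
    linear_combination (2 * ((1 - x) * t - ((m : ℝ) + 2) * x ^ (m + 1))) * e2
      - s * (1 - x) * e3
  have hrhs : 0 ≤ (1 - x) ^ 2 * (2 * t ^ 2 - s * w) := by
    rw [hid]
    exact mul_nonneg (mul_nonneg (by positivity) (pow_nonneg hx0 m)) hinner_nonneg
  have h01 : 0 < 1 - x := by linarith
  have hu : 0 < (1 - x) ^ 2 := by positivity
  have := (mul_nonneg_iff_of_pos_left hu).mp hrhs
  linarith

lemma continuous_gsum (L : ℕ) : Continuous (gsum L) := by
  unfold gsum
  exact continuous_finset_sum _ fun i _ => continuous_pow i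

lemma gsumInv_convex (m : ℕ) :
    ConvexOn ℝ (Set.Icc (0:ℝ) 1) (fun x => (gsum (m + 2) x)⁻¹) := by
  have hpos : ∀ x : ℝ, 0 ≤ x → 0 < gsum (m + 2) x := fun x hx =>
    gsum_pos (m + 2) (by omega) x hx
  have hint : interior (Set.Icc (0:ℝ) 1) = Set.Ioo (0:ℝ) 1 := interior_Icc
  refine convexOn_of_hasDerivWithinAt2_nonneg (convex_Icc 0 1)
    (f' := fun x => -gsum1 (m + 2) x / (gsum (m + 2) x) ^ 2)
    (f'' := fun x => gsum (m + 2) x *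
      (2 * (gsum1 (m + 2) x) ^ 2 - gsum (m + 2) x * gsum2 (m + 2) x) /
      ((gsum (m + 2) x) ^ 2) ^ 2)
    ?_ ?_ ?_ ?_
  · exact ((continuous_gsum (m + 2)).continuousOn).inv₀
      fun x hx => ne_of_gt (hpos x hx.1)
  · intro x hx
    rw [hint] at hx
    exact ((hasDerivAt_gsum (m + 2) x).inv (ne_of_gt (hpos x hx.1.le))).hasDerivWithinAt
  · intro x hx
    rw [hint] at hx
    have hne : (gsum (m + 2) x) ^ 2 ≠ 0 := pow_ne_zero 2 (ne_of_gt (hpos x hx.1.le))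
    have H := ((hasDerivAt_gsum1 (m + 2) x).neg.div
      ((hasDerivAt_gsum (m + 2) x).pow 2) hne)
    have heq : (-gsum2 (m + 2) x * gsum (m + 2) x ^ 2 -
        -gsum1 (m + 2) x * ((2 : ℕ) * gsum (m + 2) x ^ (2 - 1) * gsum1 (m + 2) x)) /
        (gsum (m + 2) x ^ 2) ^ 2
        = gsum (m + 2) x *
          (2 * (gsum1 (m + 2) x) ^ 2 - gsum (m + 2) x * gsum2 (m + 2) x) /
          ((gsum (m + 2) x) ^ 2) ^ 2 := by
      push_cast
      ring
    simp only [Pi.pow_apply, Pi.neg_apply] at H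
    rw [heq] at H
    exact H.hasDerivWithinAt
  · intro x hx
    rw [hint] at hx
    have hk := gsum_key m x hx.1.le hx.2
    have h1 := hpos x hx.1.le
    apply div_nonneg
    · exact mul_nonneg h1.le (by linarith)
    · positivity

/-- With `L = (k-1)(d-1)`, the function `p ↦ R(p)` is convex on
`[0, 1 - 1/L]`, where `R p` is the unique root in `[0,1)` of `x = p + (1-p) x^L`
for `p ∈ [0, 1-1/L)` and `R (1-1/L) = 1`. -/
theorem stmt_3 (k d : ℕ) (hk : 2 ≤ k) (hd : 3 ≤ d) (L : ℕ) (hL : L = (k-1)*(d-1))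
    (R : ℝ → ℝ)
    (hR : ∀ p : ℝ, 0 ≤ p → p < 1 - 1/(L:ℝ) →
      R p ∈ Set.Ico (0:ℝ) 1 ∧ R p = p + (1-p) * (R p)^L)
    (hR1 : R (1 - 1/(L:ℝ)) = 1) :
    ConvexOn ℝ (Set.Icc (0:ℝ) (1 - 1/(L:ℝ))) R := by
  have hL2 : 2 ≤ L := by
    have h1 : 1 ≤ k - 1 := by omega
    have h2 : 2 ≤ d - 1 := by omega
    calc 2 = 1 * 2 := by norm_num
    _ ≤ (k-1) * (d-1) := Nat.mul_le_mul h1 h2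
    _ = L := hL.symm
  obtain ⟨m, rfl⟩ : ∃ m, L = m + 2 := ⟨L - 2, by omega⟩
  set c : ℝ := 1 - 1/((m + 2 : ℕ) : ℝ) with hc
  have hLR : (2:ℝ) ≤ ((m + 2 : ℕ) : ℝ) := by push_cast; linarith [Nat.cast_nonneg (α := ℝ) m]
  have hLpos : (0:ℝ) < ((m + 2 : ℕ) : ℝ) := by linarith
  have hc0 : 0 ≤ c := by
    have : 1/((m + 2 : ℕ) : ℝ) ≤ 1/2 := by
      apply one_div_le_one_div_of_le <;> linarith
    rw [hc]; linarith
  have hc1 : c < 1 := by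
    have : 0 < 1/((m + 2 : ℕ) : ℝ) := by positivity
    rw [hc]; linarith
  -- main structural fact
  have hfact : ∀ p : ℝ, 0 ≤ p → p ≤ c →
      (0 ≤ R p ∧ R p ≤ 1) ∧ (1 - p) * gsum (m + 2) (R p) = 1 := by
    intro p hp0 hpc
    rcases lt_or_eq_of_le hpc with hlt | heq
    · obtain ⟨⟨hx0, hx1⟩, heq⟩ := hR p hp0 hlt
      refine ⟨⟨hx0, hx1.le⟩, ?_⟩
      have hgeo : gsum (m + 2) (R p) * (R p - 1) = (R p) ^ (m + 2) - 1 :=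
        geom_sum_mul (R p) (m + 2)
      have hxne : R p - 1 ≠ 0 := sub_ne_zero_of_ne (ne_of_lt hx1)
      have hz : ((1 - p) * gsum (m + 2) (R p) - 1) * (R p - 1) = 0 := by
        linear_combination (1 - p) * hgeo - heq
      rcases mul_eq_zero.mp hz with h | h
      · linarith
      · exact absurd h hxne
    · rw [heq, hR1]
      have hg1 : gsum (m + 2) (1:ℝ) = ((m + 2 : ℕ) : ℝ) := by
        simp [gsum]
      rw [hg1, hc]
      field_simp
      exact ⟨⟨zero_le_one, le_rfl⟩, by ring⟩
  refine ⟨convex_Icc _ _, ?_⟩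
  intro p hp q hq a b ha hb hab
  simp only [smul_eq_mul]
  obtain ⟨⟨hx0, hx1⟩, hxe⟩ := hfact p hp.1 hp.2
  obtain ⟨⟨hy0, hy1⟩, hye⟩ := hfact q hq.1 hq.2
  have hr0 : 0 ≤ a*p + b*q := add_nonneg (mul_nonneg ha hp.1) (mul_nonneg hb hq.1)
  have hrc : a*p + b*q ≤ c := by nlinarith [hp.2, hq.2]
  obtain ⟨⟨hz0, hz1⟩, hze⟩ := hfact (a*p + b*q) hr0 hrc
  have hconv := (gsumInv_convex m).2 ⟨hx0, hx1⟩ ⟨hy0, hy1⟩ ha hb hab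
  simp only [smul_eq_mul] at hconv
  have hw0 : 0 ≤ a * R p + b * R q := add_nonneg (mul_nonneg ha hx0) (mul_nonneg hb hy0)
  have hgx : 0 < gsum (m + 2) (R p) := gsum_pos _ (by omega) _ hx0
  have hgy : 0 < gsum (m + 2) (R q) := gsum_pos _ (by omega) _ hy0
  have hgz : 0 < gsum (m + 2) (R (a*p + b*q)) := gsum_pos _ (by omega) _ hz0
  have hgw : 0 < gsum (m + 2) (a * R p + b * R q) := gsum_pos _ (by omega) _ hw0
  have h1p : (gsum (m + 2) (R p))⁻¹ = 1 - p := (eq_inv_of_mul_eq_one_left hxe).symm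
  have h1q : (gsum (m + 2) (R q))⁻¹ = 1 - q := (eq_inv_of_mul_eq_one_left hye).symm
  have h1r : (gsum (m + 2) (R (a*p + b*q)))⁻¹ = 1 - (a*p + b*q) :=
    (eq_inv_of_mul_eq_one_left hze).symm
  have hle : (gsum (m + 2) (a * R p + b * R q))⁻¹
      ≤ (gsum (m + 2) (R (a*p + b*q)))⁻¹ := by
    rw [h1r]
    rw [h1p, h1q] at hconv
    nlinarith
  have hgle : gsum (m + 2) (R (a*p + b*q)) ≤ gsum (m + 2) (a * R p + b * R q) :=
    (inv_le_inv₀ hgw hgz).mp hle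
  by_contra hcon
  push_neg at hcon
  have hlt : gsum (m + 2) (a * R p + b * R q) < gsum (m + 2) (R (a*p + b*q)) := by
    unfold gsum
    apply Finset.sum_lt_sum
    · intro i _
      exact pow_le_pow_left₀ hw0 hcon.le i
    · exact ⟨1, by simp, by simpa using hcon⟩
  linarith
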